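/- For integers n and t with n ≥ t ≥ 1, the number h_n(t) of t-chains in the Boolean lattice B_n satisfies h_n(t) = Σ_{i=0}^{t−1} (−1)^{t−i+1} · binom(t−1, i) · (i+2)^n (an equality of integers). -/

import Mathlib

open Finset

/-- The set of `t`-chains in the Boolean lattice `B_n`: families of `t`
pairwise comparable (under inclusion) subsets of `[n]`. -/
def boolChains (n t : ℕ) : Finset (Finset (Finset (Fin n))) :=
  Finset.univ.filter (fun C => C.card = t ∧ ∀ A ∈ C, ∀ B ∈ C, A ⊆ B ∨ B ⊆ A)

namespace BoolChainsAux

variable {n : ℕ}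

/-- number of members of `C` not containing `x` -/
def fc (C : Finset (Finset (Fin n))) (x : Fin n) : ℕ := #(C.filter fun A => x ∉ A)

/-- number of members of `C` strictly below `A` -/
def kc (C : Finset (Finset (Fin n))) (A : Finset (Fin n)) : ℕ := #(C.filter fun B => B ⊂ A)

lemma fc_le_card (C : Finset (Finset (Fin n))) (x : Fin n) : fc C x ≤ #C :=
  card_filter_le _ _

lemma mem_iff_fc_le {C : Finset (Finset (Fin n))}
    (hC : ∀ A ∈ C, ∀ B ∈ C, A ⊆ B ∨ B ⊆ A) {A : Finset (Fin n)} (hA : A ∈ C) (x : Fin n) :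
    x ∈ A ↔ fc C x ≤ kc C A := by
  constructor
  · intro hx
    apply card_le_card
    intro B hB
    simp only [mem_filter] at hB ⊢
    refine ⟨hB.1, ?_⟩
    rcases hC A hA B hB.1 with h | h
    · exact absurd (h hx) hB.2
    · exact ssubset_of_subset_of_ne h (fun he => hB.2 (he ▸ hx))
  · intro hle
    by_contra hx
    have hsub : insert A (C.filter fun B => B ⊂ A) ⊆ C.filter fun B => x ∉ B := by
      intro B hB
      rcases mem_insert.mp hB with rfl | hB
      · exact mem_filter.mpr ⟨hA, hx⟩
      · simp only [mem_filter] at hB ⊢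
        exact ⟨hB.1, fun hxB => hx (hB.2.1 hxB)⟩
    have hnot : A ∉ C.filter fun B => B ⊂ A := by
      simp [ssubset_irrefl]
    have := card_le_card hsub
    rw [card_insert_of_notMem hnot] at this
    have : kc C A + 1 ≤ fc C x := this
    omega

lemma kc_mono {C : Finset (Finset (Fin n))} {A A' : Finset (Fin n)} (h : A ⊆ A') :
    kc C A ≤ kc C A' := by
  apply card_le_card
  intro B hB
  simp only [mem_filter] at hB ⊢
  exact ⟨hB.1, lt_of_lt_of_le hB.2 h⟩

lemma kc_lt_of_ssubset {C : Finset (Finset (Fin n))} {A A' : Finset (Fin n)}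
    (hA : A ∈ C) (h : A ⊂ A') : kc C A < kc C A' := by
  have hsub : insert A (C.filter fun B => B ⊂ A) ⊆ C.filter fun B => B ⊂ A' := by
    intro B hB
    rcases mem_insert.mp hB with rfl | hB
    · exact mem_filter.mpr ⟨hA, h⟩
    · simp only [mem_filter] at hB ⊢
      exact ⟨hB.1, hB.2.trans h⟩
  have hnot : A ∉ C.filter fun B => B ⊂ A := by simp [ssubset_irrefl]
  have := card_le_card hsub
  rw [card_insert_of_notMem hnot] at this
  exact this

lemma kc_lt_card {C : Finset (Finset (Fin n))} {A : Finset (Fin n)} (hA : A ∈ C) :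
    kc C A < #C := by
  apply card_lt_card
  constructor
  · exact filter_subset _ _
  · intro hsub
    have := mem_filter.mp (hsub hA)
    exact ssubset_irrefl A this.2

lemma kc_image {C : Finset (Finset (Fin n))} {t : ℕ}
    (hC : ∀ A ∈ C, ∀ B ∈ C, A ⊆ B ∨ B ⊆ A) (hcard : #C = t) :
    C.image (kc C) = range t := by
  have hinj : Set.InjOn (kc C) C := by
    intro A hA A' hA' h
    simp only [mem_coe] at hA hA'
    by_contra hne
    rcases hC A hA A' hA' with hs | hs
    · exact absurd h (Nat.ne_of_lt (kc_lt_of_ssubset hA (ssubset_of_subset_of_ne hs hne)))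
    · exact absurd h.symm
        (Nat.ne_of_lt (kc_lt_of_ssubset hA' (ssubset_of_subset_of_ne hs (Ne.symm hne))))
  apply eq_of_subset_of_card_le
  · intro j hj
    simp only [mem_image] at hj
    obtain ⟨A, hA, rfl⟩ := hj
    exact mem_range.mpr (hcard ▸ kc_lt_card hA)
  · rw [card_range, card_image_of_injOn hinj, hcard]

lemma recover {C : Finset (Finset (Fin n))}
    (hC : ∀ A ∈ C, ∀ B ∈ C, A ⊆ B ∨ B ⊆ A) {A : Finset (Fin n)} (hA : A ∈ C) :
    A = univ.filter (fun x => fc C x ≤ kc C A) := by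
  ext x
  simp [mem_iff_fc_le hC hA x]

lemma attained {C : Finset (Finset (Fin n))} {t : ℕ}
    (hC : ∀ A ∈ C, ∀ B ∈ C, A ⊆ B ∨ B ⊆ A) (hcard : #C = t)
    {j : ℕ} (h1 : 1 ≤ j) (h2 : j < t) : ∃ x, fc C x = j := by
  have himg := kc_image hC hcard
  have hj : j ∈ C.image (kc C) := himg ▸ mem_range.mpr h2
  have hj' : j - 1 ∈ C.image (kc C) := himg ▸ mem_range.mpr (by omega)
  simp only [mem_image] at hj hj'
  obtain ⟨A, hA, hkA⟩ := hj
  obtain ⟨A', hA', hkA'⟩ := hj'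
  have hns : ¬ A ⊆ A' := fun hs => by
    have := kc_mono (C := C) hs
    omega
  obtain ⟨x, hxA, hxA'⟩ := Finset.not_subset.mp hns
  refine ⟨x, le_antisymm ?_ ?_⟩
  · have := (mem_iff_fc_le hC hA x).mp hxA
    omega
  · have := (mem_iff_fc_le hC hA' x).not.mp hxA'
    omega

/-- the `j`-th set of the chain associated to a function `g : Fin n → ℕ` -/
def aset (g : Fin n → ℕ) (j : ℕ) : Finset (Fin n) := univ.filter (fun x => g x ≤ j)

def chainOf (g : Fin n → ℕ) (t : ℕ) : Finset (Finset (Fin n)) :=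
  (range t).image (aset g)

lemma aset_injOn {g : Fin n → ℕ} {t : ℕ}
    (hg : ∀ j : ℕ, 1 ≤ j → j < t → ∃ x, g x = j) :
    Set.InjOn (aset g) (range t) := by
  have key : ∀ j j' : ℕ, j < j' → j' < t → aset g j ≠ aset g j' := by
    intro j j' hjj' hj' he
    obtain ⟨x, hx⟩ := hg (j + 1) (by omega) (by omega)
    have hx1 : x ∈ aset g j' := mem_filter.mpr ⟨mem_univ _, by omega⟩
    have hx2 : x ∉ aset g j := by simp [aset, hx]
    exact hx2 (he ▸ hx1)
  intro j hj j' hj' h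
  simp only [coe_range, Set.mem_Iio] at hj hj'
  by_contra hne
  rcases Nat.lt_or_ge j j' with hlt | hge
  · exact key j j' hlt hj' h
  · exact key j' j (by omega) hj h.symm

lemma card_chainOf {g : Fin n → ℕ} {t : ℕ}
    (hg : ∀ j : ℕ, 1 ≤ j → j < t → ∃ x, g x = j) :
    #(chainOf g t) = t := by
  rw [chainOf, card_image_of_injOn (aset_injOn hg), card_range]

lemma chainOf_comparable (g : Fin n → ℕ) (t : ℕ) :
    ∀ A ∈ chainOf g t, ∀ B ∈ chainOf g t, A ⊆ B ∨ B ⊆ A := by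
  intro A hA B hB
  simp only [chainOf, mem_image] at hA hB
  obtain ⟨j, -, rfl⟩ := hA
  obtain ⟨j', -, rfl⟩ := hB
  rcases le_or_gt j j' with h | h
  · left; intro x hx; simp only [aset, mem_filter] at hx ⊢; exact ⟨hx.1, by omega⟩
  · right; intro x hx; simp only [aset, mem_filter] at hx ⊢; exact ⟨hx.1, by omega⟩

lemma fc_chainOf {g : Fin n → ℕ} {t : ℕ}
    (hg : ∀ j : ℕ, 1 ≤ j → j < t → ∃ x, g x = j) (hgt : ∀ x, g x ≤ t) (x : Fin n) :
    fc (chainOf g t) x = g x := by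
  have h1 : (chainOf g t).filter (fun A => x ∉ A) =
      ((range t).filter (fun j => x ∉ aset g j)).image (aset g) := by
    rw [chainOf, filter_image]
  have h2 : (range t).filter (fun j => x ∉ aset g j) = range (g x) := by
    ext j
    simp only [mem_filter, mem_range, aset, Finset.mem_filter, mem_univ, true_and, not_le]
    have := hgt x
    omega
  rw [fc, h1, h2, card_image_of_injOn ?_, card_range]
  intro j hj j' hj' h
  simp only [coe_range, Set.mem_Iio] at hj hj'
  have hx := hgt x
  exact aset_injOn hg (by simp only [coe_range, Set.mem_Iio]; omega)
    (by simp only [coe_range, Set.mem_Iio]; omega) h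

lemma chainOf_fc {C : Finset (Finset (Fin n))} {t : ℕ}
    (hC : ∀ A ∈ C, ∀ B ∈ C, A ⊆ B ∨ B ⊆ A) (hcard : #C = t) :
    chainOf (fc C) t = C := by
  apply Finset.Subset.antisymm
  · intro A hA
    simp only [chainOf, mem_image] at hA
    obtain ⟨j, hj, rfl⟩ := hA
    have hj' : j ∈ C.image (kc C) := (kc_image hC hcard) ▸ hj
    simp only [mem_image] at hj'
    obtain ⟨B, hB, rfl⟩ := hj'
    have := recover hC hB
    rw [aset, ← this]
    exact hB
  · intro A hA
    simp only [chainOf, mem_image]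
    refine ⟨kc C A, mem_range.mpr (hcard ▸ kc_lt_card hA), ?_⟩
    rw [aset, ← recover hC hA]

end BoolChainsAux

open BoolChainsAux in
theorem stmt0 (n t : ℕ) (ht : 1 ≤ t) (hnt : t ≤ n) :
    ((boolChains n t).card : ℤ) =
      ∑ i ∈ Finset.range t,
        (-1 : ℤ) ^ (t - i + 1) * (Nat.choose (t - 1) i) * ((i : ℤ) + 2) ^ n := by
  classical
  -- The target set of functions
  set T : Finset (Fin n → Fin (t + 1)) :=
    univ.filter (fun f => ∀ j : Fin (t + 1), 1 ≤ (j : ℕ) → (j : ℕ) < t → ∃ x, f x = j) with hT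
  -- Step 1 : bijection
  have hbij : (boolChains n t).card = T.card := by
    apply Finset.card_nbij'
      (fun C => fun x => (⟨min (fc C x) t, by omega⟩ : Fin (t + 1)))
      (fun f => chainOf (fun x => ((f x : ℕ))) t)
    · intro C hC
      simp only [mem_coe, boolChains, mem_filter, mem_univ, true_and] at hC
      obtain ⟨hcard, hcomp⟩ := hC
      simp only [mem_coe, hT, mem_filter, mem_univ, true_and]
      intro j h1 h2
      obtain ⟨x, hx⟩ := attained hcomp hcard h1 h2
      exact ⟨x, by apply Fin.ext; simp [hx]; omega⟩
    · intro f hf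
      simp only [mem_coe, hT, mem_filter, mem_univ, true_and] at hf
      have hg : ∀ j : ℕ, 1 ≤ j → j < t → ∃ x, ((f x : ℕ)) = j := by
        intro j h1 h2
        obtain ⟨x, hx⟩ := hf ⟨j, by omega⟩ (by simpa) (by simpa)
        exact ⟨x, by rw [hx]⟩
      simp only [mem_coe, boolChains, mem_filter, mem_univ, true_and]
      exact ⟨card_chainOf hg, chainOf_comparable _ _⟩
    · intro C hC
      simp only [mem_coe, boolChains, mem_filter, mem_univ, true_and] at hC
      obtain ⟨hcard, hcomp⟩ := hC
      have hle : ∀ x, fc C x ≤ t := fun x => hcard ▸ fc_le_card C x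
      have : (fun x => ((( ⟨min (fc C x) t, by omega⟩ : Fin (t+1)) : Fin (t+1)) : ℕ)) = fc C := by
        funext x
        show min (fc C x) t = fc C x
        have := hle x
        omega
      beta_reduce
      rw [this]
      exact chainOf_fc hcomp hcard
    · intro f hf
      simp only [mem_coe, hT, mem_filter, mem_univ, true_and] at hf
      have hg : ∀ j : ℕ, 1 ≤ j → j < t → ∃ x, ((f x : ℕ)) = j := by
        intro j h1 h2
        obtain ⟨x, hx⟩ := hf ⟨j, by omega⟩ (by simpa) (by simpa)
        exact ⟨x, by rw [hx]⟩
      funext x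
      apply Fin.ext
      have h := fc_chainOf hg (fun x => (f x).is_le) x
      simp only [h]
      have := (f x).is_le
      omega
  -- Step 2 : inclusion-exclusion
  set S : Finset (Fin (t + 1)) := univ.filter (fun j => 1 ≤ (j : ℕ) ∧ (j : ℕ) < t) with hS
  have hScard : #S = t - 1 := by
    have : S = Finset.Ioo (0 : Fin (t + 1)) (Fin.last t) := by
      ext j
      simp only [hS, mem_filter, mem_univ, true_and, Finset.mem_Ioo, Fin.lt_def,
        Fin.val_zero, Fin.val_last]
      omega
    rw [this, Fin.card_Ioo]
    simp
  have havoid : ∀ U : Finset (Fin (t + 1)),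
      #(univ.filter (fun f : Fin n → Fin (t + 1) => ∀ x, f x ∉ U)) = (t + 1 - #U) ^ n := by
    intro U
    have : univ.filter (fun f : Fin n → Fin (t + 1) => ∀ x, f x ∉ U) =
        Fintype.piFinset (fun _ : Fin n => Uᶜ) := by
      ext f
      simp [Fintype.mem_piFinset]
    rw [this, Fintype.card_piFinset_const, card_compl, Fintype.card_fin]
  have hincl : (T.card : ℤ) =
      ∑ U ∈ S.powerset, (-1 : ℤ) ^ #U * ((t + 1 - #U : ℕ) : ℤ) ^ n := by
    have key : ∀ U ∈ S.powerset,
        (-1 : ℤ) ^ #U * ((t + 1 - #U : ℕ) : ℤ) ^ n =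
        ∑ f : Fin n → Fin (t + 1), (-1 : ℤ) ^ #U * (if ∀ x, f x ∉ U then 1 else 0) := by
      intro U _
      rw [← Finset.mul_sum]
      congr 1
      rw [Finset.sum_boole]
      rw_mod_cast [← havoid U]
    rw [Finset.sum_congr rfl key, Finset.sum_comm]
    have inner : ∀ f : Fin n → Fin (t + 1),
        (∑ U ∈ S.powerset, (-1 : ℤ) ^ #U * (if ∀ x, f x ∉ U then 1 else 0)) =
        (if f ∈ T then 1 else 0) := by
      intro f
      have h1 : ∀ U ∈ S.powerset, (-1 : ℤ) ^ #U * (if ∀ x, f x ∉ U then 1 else 0) =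
          if ∀ x, f x ∉ U then (-1 : ℤ) ^ #U else 0 := by
        intro U _; split <;> simp
      rw [Finset.sum_congr rfl h1, Finset.sum_ite, Finset.sum_const_zero, add_zero]
      have h2 : S.powerset.filter (fun U => ∀ x, f x ∉ U) =
          (S.filter (fun j => ∀ x, f x ≠ j)).powerset := by
        ext U
        simp only [mem_filter, mem_powerset]
        constructor
        · rintro ⟨hUS, hU⟩ j hj
          exact mem_filter.mpr ⟨hUS hj, fun x hx => hU x (hx ▸ hj)⟩
        · intro hU
          refine ⟨fun j hj => (mem_filter.mp (hU hj)).1, fun x hx => ?_⟩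
          exact (mem_filter.mp (hU hx)).2 x rfl
      rw [h2, Finset.sum_powerset_neg_one_pow_card]
      have h3 : (S.filter (fun j => ∀ x, f x ≠ j)) = ∅ ↔ f ∈ T := by
        rw [Finset.filter_eq_empty_iff]
        simp only [hT, mem_filter, mem_univ, true_and, hS]
        constructor
        · intro h j hj1 hj2
          have := @h j ⟨hj1, hj2⟩
          push_neg at this
          exact this
        · intro h j hj
          push_neg
          exact h j hj.1 hj.2
      by_cases hc : f ∈ T
      · rw [if_pos (h3.mpr hc), if_pos hc]
      · rw [if_neg (fun he => hc (h3.mp he)), if_neg hc]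
    rw [Finset.sum_congr rfl (fun f _ => inner f), Finset.sum_ite_mem,
      Finset.univ_inter, Finset.sum_const]
    simp
  -- Step 3 : group by cardinality and reindex
  rw [hbij, hincl]
  have hgroup : (∑ U ∈ S.powerset, (-1 : ℤ) ^ #U * ((t + 1 - #U : ℕ) : ℤ) ^ n) =
      ∑ m ∈ Finset.range t, ((t - 1).choose m : ℤ) * ((-1 : ℤ) ^ m * ((t + 1 - m : ℕ) : ℤ) ^ n) := by
    rw [Finset.sum_powerset_apply_card (fun m => (-1 : ℤ) ^ m * ((t + 1 - m : ℕ) : ℤ) ^ n), hScard]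
    have : t - 1 + 1 = t := by omega
    rw [this]
    refine Finset.sum_congr rfl fun m _ => ?_
    rw [nsmul_eq_mul]
  rw [hgroup, ← Finset.sum_range_reflect]
  refine Finset.sum_congr rfl fun i hi => ?_
  rw [Finset.mem_range] at hi
  have h1 : t - 1 - i ≤ t - 1 := by omega
  have h3 : t + 1 - (t - 1 - i) = i + 2 := by omega
  have h4 : t - i + 1 = (t - 1 - i) + 2 := by omega
  rw [Nat.choose_symm (show i ≤ t - 1 by omega), h3, h4, pow_add, neg_one_sq]
  push_cast
  ring
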